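/- For every integer n ≥ 1, the number of partitions λ of n whose Durfee square size d satisfies λ_d > d equals the alternating sum ∑_{j≥0} (−1)^j p(n − j(j+1)/2), where the sum runs over all j ≥ 0 with j(j+1)/2 ≤ n. -/

import Mathlib

/-- `l.nthPart i` is the `i`-th largest part of `l` (1-indexed); `0` if `i` is
out of range. -/
def Nat.Partition.nthPart {n : ℕ} (l : n.Partition) (i : ℕ) : ℕ :=
  (l.parts.sort (· ≥ ·)).getD (i - 1) 0

/-- The size of the Durfee square of `l`: the largest `i ≥ 1` with `λ_i ≥ i`. -/
noncomputable def Nat.Partition.durfee {n : ℕ} (l : n.Partition) : ℕ :=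
  sSup {i : ℕ | 1 ≤ i ∧ i ≤ l.nthPart i}

namespace Stmt8Aux

/-! ### Basic facts about the `i`-th part of a sorted list -/

def nth (L : List ℕ) (i : ℕ) : ℕ := L.getD (i - 1) 0

lemma nth_anti {L : List ℕ} (hL : L.Pairwise (· ≥ ·)) {i j : ℕ} (hi : 1 ≤ i) (hij : i ≤ j) :
    nth L j ≤ nth L i := by
  rcases eq_or_lt_of_le hij with rfl | hlt
  · exact le_refl _
  unfold nth
  rcases lt_or_ge (j - 1) L.length with hj | hj
  · rw [List.getD_eq_getElem _ _ hj, List.getD_eq_getElem _ _ (lt_of_le_of_lt (by omega) hj)]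
    exact List.pairwise_iff_getElem.1 hL _ _ _ _ (by omega)
  · rw [List.getD_eq_default _ _ hj]; exact Nat.zero_le _

lemma nth_le_sum (L : List ℕ) (i : ℕ) : nth L i ≤ L.sum := by
  unfold nth
  rcases lt_or_ge (i - 1) L.length with h | h
  · rw [List.getD_eq_getElem _ _ h]
    exact List.single_le_sum (fun x _ => Nat.zero_le x) _ (List.getElem_mem h)
  · rw [List.getD_eq_default _ _ h]; exact Nat.zero_le _

lemma lt_length_of_nth_pos {L : List ℕ} {i : ℕ} (h : 0 < nth L i) : i - 1 < L.length := by
  by_contra hc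
  push_neg at hc
  rw [nth, List.getD_eq_default _ _ hc] at h
  omega

lemma nth_eq_getElem {L : List ℕ} {i : ℕ} (h : i - 1 < L.length) :
    nth L i = L[i-1] := List.getD_eq_getElem _ _ h

lemma mem_take_nth {L : List ℕ} {m : ℕ} {x : ℕ} (hx : x ∈ L.take m) :
    ∃ i, 1 ≤ i ∧ i ≤ m ∧ x = nth L i := by
  obtain ⟨i, hi, rfl⟩ := List.mem_iff_getElem.1 hx
  have hi' : i < L.length := lt_of_lt_of_le hi (by simp [List.length_take])
  refine ⟨i + 1, by omega, by simp [List.length_take] at hi; omega, ?_⟩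
  rw [nth_eq_getElem (by simpa using hi')]
  simp [List.getElem_take]

lemma mem_drop_nth {L : List ℕ} {m : ℕ} {x : ℕ} (hx : x ∈ L.drop m) :
    ∃ i, m + 1 ≤ i ∧ x = nth L i := by
  obtain ⟨i, hi, rfl⟩ := List.mem_iff_getElem.1 hx
  rw [List.length_drop] at hi
  refine ⟨m + i + 1, by omega, ?_⟩
  rw [nth_eq_getElem (by simp; omega)]
  simp [List.getElem_drop]

lemma getD_drop (L : List ℕ) (m j : ℕ) : (L.drop m).getD j 0 = L.getD (m + j) 0 := by
  rcases lt_or_ge (m + j) L.length with h | h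
  · rw [List.getD_eq_getElem _ _ (by simp [List.length_drop]; omega),
      List.getD_eq_getElem _ _ h, List.getElem_drop]
  · rw [List.getD_eq_default _ _ (by simp [List.length_drop]; omega),
      List.getD_eq_default _ _ h]

lemma sum_map_add_one (l : List ℕ) : (l.map (· + 1)).sum = l.sum + l.length := by
  induction l with
  | nil => simp
  | cons a t ih => simp [ih]; omega

lemma sum_map_sub_one (l : List ℕ) (h : ∀ x ∈ l, 0 < x) :
    (l.map (· - 1)).sum + l.length = l.sum := by
  induction l with
  | nil => simp
  | cons a t ih =>
      have ha := h a (by simp)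
      have := ih (fun x hx => h x (by simp [hx]))
      simp only [List.map_cons, List.sum_cons, List.length_cons]
      omega

lemma take_split (L : List ℕ) (d : ℕ) (h1 : 1 ≤ d) (h2 : d - 1 < L.length) :
    L = L.take (d-1) ++ L[d-1] :: L.drop d := by
  obtain ⟨e, rfl⟩ : ∃ e, d = e + 1 := ⟨d - 1, by omega⟩
  simp only [Nat.add_sub_cancel] at h2 ⊢
  conv_lhs => rw [← List.take_append_drop (e+1) L]
  rw [List.take_succ, List.getElem?_eq_getElem h2]
  simp

/-! ### Generalized Durfee numbers -/

def dS (k : ℕ) (L : List ℕ) : Set ℕ := {i | 1 ≤ i ∧ i + k ≤ nth L i}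

noncomputable def dfe (k : ℕ) (L : List ℕ) : ℕ := sSup (dS k L)

lemma dS_bdd (k : ℕ) (L : List ℕ) : BddAbove (dS k L) :=
  ⟨L.sum, fun i hi => le_trans (le_trans (Nat.le_add_right i k) hi.2) (nth_le_sum L i)⟩

lemma dfe_eq {L : List ℕ} (hL : L.Pairwise (· ≥ ·)) {k d : ℕ} (hd1 : 1 ≤ d)
    (hd2 : d + k ≤ nth L d) (hd3 : nth L (d + 1) ≤ d + k) : dfe k L = d := by
  apply le_antisymm
  · apply csSup_le (show (dS k L).Nonempty from ⟨d, hd1, hd2⟩)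
    intro i hi
    by_contra hc
    push_neg at hc
    have h1 : nth L i ≤ nth L (d + 1) := nth_anti hL (by omega) (by omega)
    have := hi.2
    omega
  · exact le_csSup (dS_bdd k L) ⟨hd1, hd2⟩

lemma dfe_eq_zero {L : List ℕ} (hL : L.Pairwise (· ≥ ·)) {k : ℕ} (h : nth L 1 ≤ k) :
    dfe k L = 0 := by
  have : dS k L = ∅ := by
    ext i
    simp only [dS, Set.mem_setOf_eq, Set.mem_empty_iff_false, iff_false, not_and]
    intro hi
    have := nth_anti hL (le_refl 1) hi
    omega
  rw [dfe, this, csSup_empty]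
  rfl

lemma dfe_spec {L : List ℕ} (hL : L.Pairwise (· ≥ ·)) {k : ℕ} (h : (dS k L).Nonempty) :
    1 ≤ dfe k L ∧ dfe k L + k ≤ nth L (dfe k L) ∧ nth L (dfe k L + 1) ≤ dfe k L + k := by
  have hmem := Nat.sSup_mem h (dS_bdd k L)
  refine ⟨hmem.1, hmem.2, ?_⟩
  by_contra hc
  push_neg at hc
  have h2 : dfe k L + 1 ∈ dS k L := ⟨by omega, by omega⟩
  have := le_csSup (dS_bdd k L) h2
  change dfe k L + 1 ≤ dfe k L at this
  omega

/-- "tight" at level `k`: the level-`k` Durfee row has exactly its minimal size. -/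
def Tk (k : ℕ) (L : List ℕ) : Prop :=
  ∃ d, 1 ≤ d ∧ nth L d = d + k ∧ nth L (d + 1) ≤ d + k

lemma Tk_dfe {L : List ℕ} (hL : L.Pairwise (· ≥ ·)) {k : ℕ} (hT : Tk k L) :
    1 ≤ dfe k L ∧ nth L (dfe k L) = dfe k L + k ∧ nth L (dfe k L + 1) ≤ dfe k L + k := by
  obtain ⟨d, h1, h2, h3⟩ := hT
  have hde : dfe k L = d := dfe_eq hL h1 (le_of_eq h2.symm) h3
  rw [hde]
  exact ⟨h1, h2, h3⟩
/-- forward building block -/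
def fA (d : ℕ) (L : List ℕ) : List ℕ := (L.take (d-1)).map (· + 1) ++ L.drop d
/-- backward building block -/
def gB (k e : ℕ) (M : List ℕ) : List ℕ :=
  (M.take e).map (· - 1) ++ (e + 1 + k) :: M.drop e

noncomputable def fwdL (k : ℕ) (L : List ℕ) : List ℕ := fA (dfe k L) L
noncomputable def bwdL (k : ℕ) (M : List ℕ) : List ℕ := gB k (dfe (k+1) M) M

section CoreA
variable {k d : ℕ} {L : List ℕ}

lemma lenA (hd1 : 1 ≤ d) (hd2 : nth L d = d + k) : d - 1 < L.length :=
  lt_length_of_nth_pos (by omega)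

lemma nthA_low (hd1 : 1 ≤ d) (hd2 : nth L d = d + k) {i : ℕ} (hi1 : 1 ≤ i)
    (hi2 : i ≤ d - 1) : nth (fA d L) i = nth L i + 1 := by
  have hlen := lenA hd1 hd2
  have h1 : i - 1 < ((L.take (d-1)).map (· + 1)).length := by
    simp [List.length_take]; omega
  rw [nth, fA, List.getD_append _ _ _ _ h1, List.getD_eq_getElem _ _ h1]
  simp only [List.getElem_map, List.getElem_take]
  rw [nth, List.getD_eq_getElem _ _ (by omega)]

lemma nthA_high (hd1 : 1 ≤ d) (hd2 : nth L d = d + k) {i : ℕ} (hi : d ≤ i) :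
    nth (fA d L) i = nth L (i + 1) := by
  have hlen := lenA hd1 hd2
  have h1 : ((L.take (d-1)).map (· + 1)).length = d - 1 := by
    simp [List.length_take]; omega
  rw [nth, fA, List.getD_append_right _ _ _ _ (by omega), h1, getD_drop]
  rw [nth]
  congr 1
  omega

lemma sumA (hd1 : 1 ≤ d) (hd2 : nth L d = d + k) : (fA d L).sum + (k + 1) = L.sum := by
  have hlen := lenA hd1 hd2
  have hsplit := take_split L d hd1 hlen
  have hget : L[d-1] = d + k := by rw [← nth_eq_getElem hlen, hd2]
  conv_rhs => rw [hsplit]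
  rw [fA]
  simp only [List.sum_append, List.sum_cons, sum_map_add_one, List.length_take, hget]
  have : (d-1) ⊓ L.length = d - 1 := by omega
  rw [this]
  omega

lemma sortedA (hL : L.Pairwise (· ≥ ·)) (hd1 : 1 ≤ d) (hd2 : nth L d = d + k)
    (hd3 : nth L (d+1) ≤ d + k) : (fA d L).Pairwise (· ≥ ·) := by
  rw [fA, List.pairwise_append]
  refine ⟨List.Pairwise.map _ (fun a b h => by omega)
      (List.Pairwise.sublist (List.take_sublist _ _) hL),
    List.Pairwise.sublist (List.drop_sublist _ _) hL, ?_⟩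
  intro a ha b hb
  obtain ⟨x, hx, rfl⟩ := List.mem_map.1 ha
  obtain ⟨i, hi1, hi2, rfl⟩ := mem_take_nth hx
  obtain ⟨j, hj, rfl⟩ := mem_drop_nth hb
  have h1 : nth L j ≤ nth L (d+1) := nth_anti hL (by omega) hj
  have h2 : nth L d ≤ nth L i := nth_anti hL hi1 (by omega)
  omega

lemma posA (hpos : ∀ x ∈ L, 0 < x) : ∀ x ∈ fA d L, 0 < x := by
  intro x hx
  rw [fA, List.mem_append] at hx
  rcases hx with hx | hx
  · obtain ⟨y, _, rfl⟩ := List.mem_map.1 hx; omega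
  · exact hpos x (List.mem_of_mem_drop hx)

lemma dfeA (hL : L.Pairwise (· ≥ ·)) (hd1 : 1 ≤ d) (hd2 : nth L d = d + k)
    (hd3 : nth L (d+1) ≤ d + k) : dfe (k+1) (fA d L) = d - 1 := by
  rcases eq_or_lt_of_le hd1 with rfl | hd2'
  · rw [dfe_eq_zero (sortedA hL hd1 hd2 hd3)]
    rw [nthA_high hd1 hd2 (le_refl 1)]
    omega
  · apply dfe_eq (sortedA hL hd1 hd2 hd3) (by omega)
    · rw [nthA_low hd1 hd2 (by omega) (le_refl _)]
      have : nth L d ≤ nth L (d-1) := nth_anti hL (by omega) (by omega)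
      omega
    · rw [show d - 1 + 1 = d by omega, nthA_high hd1 hd2 (le_refl d)]
      omega

lemma ntA (hL : L.Pairwise (· ≥ ·)) (hd1 : 1 ≤ d) (hd2 : nth L d = d + k)
    (hd3 : nth L (d+1) ≤ d + k) : ¬ Tk (k+1) (fA d L) := by
  rintro ⟨e, he1, he2, he3⟩
  have hde : dfe (k+1) (fA d L) = e :=
    dfe_eq (sortedA hL hd1 hd2 hd3) he1 (le_of_eq he2.symm) he3
  rw [dfeA hL hd1 hd2 hd3] at hde
  have hd2' : 2 ≤ d := by omega
  rw [← hde] at he2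
  rw [nthA_low hd1 hd2 (by omega) (le_refl _)] at he2
  have : nth L d ≤ nth L (d-1) := nth_anti hL (by omega) (by omega)
  omega

lemma invA (hL : L.Pairwise (· ≥ ·)) (hd1 : 1 ≤ d) (hd2 : nth L d = d + k)
    (hd3 : nth L (d+1) ≤ d + k) : bwdL k (fA d L) = L := by
  have hlen := lenA (k := k) hd1 hd2
  have hblock : ((L.take (d-1)).map (· + 1)).length = d - 1 := by
    simp [List.length_take]; omega
  rw [bwdL, dfeA hL hd1 hd2 hd3, gB, fA]
  rw [List.take_left' hblock, List.drop_left' hblock]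
  have hmm : (((L.take (d-1)).map (· + 1)).map (· - 1)) = L.take (d-1) := by
    rw [List.map_map]
    have : ((· - 1) ∘ (· + 1) : ℕ → ℕ) = id := by funext x; simp
    rw [this, List.map_id]
  rw [hmm]
  have hget : L[d-1] = d - 1 + 1 + k := by rw [← nth_eq_getElem hlen, hd2]; omega
  conv_rhs => rw [take_split L d hd1 hlen]
  rw [hget]
end CoreA
lemma notTk_facts {k : ℕ} {M : List ℕ} (hM : M.Pairwise (· ≥ ·)) (hnT : ¬ Tk (k+1) M) :
    nth M (dfe (k+1) M + 1) ≤ dfe (k+1) M + k + 1 ∧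
    (1 ≤ dfe (k+1) M → dfe (k+1) M + k + 2 ≤ nth M (dfe (k+1) M)) := by
  rcases (dS (k+1) M).eq_empty_or_nonempty with hS | hS
  · have he : dfe (k+1) M = 0 := by
      rw [dfe, hS, csSup_empty]; rfl
    have h1 : (1 : ℕ) ∉ dS (k+1) M := by rw [hS]; exact Set.notMem_empty _
    simp only [dS, Set.mem_setOf_eq, not_and, not_le] at h1
    have := h1 (le_refl 1)
    rw [he]
    exact ⟨by simp only [Nat.zero_add]; omega, by omega⟩
  · obtain ⟨h1, h2, h3⟩ := dfe_spec hM hS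
    refine ⟨by omega, fun _ => ?_⟩
    rcases eq_or_lt_of_le h2 with heq | hlt
    · exact absurd ⟨dfe (k+1) M, h1, heq.symm, by omega⟩ hnT
    · omega

section CoreB
variable {k e : ℕ} {M : List ℕ}

lemma lenB (hpos : ∀ x ∈ M, 0 < x) (he3 : 1 ≤ e → e + k + 2 ≤ nth M e) : e ≤ M.length := by
  rcases Nat.eq_zero_or_pos e with rfl | he
  · omega
  · have := lt_length_of_nth_pos (i := e) (L := M) (by have := he3 he; omega)
    omega

lemma hblockB (hpos : ∀ x ∈ M, 0 < x) (he3 : 1 ≤ e → e + k + 2 ≤ nth M e) :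
    ((M.take e).map (· - 1)).length = e := by
  have := lenB (k := k) hpos he3
  simp [List.length_take]
  omega

lemma nthB_low (hpos : ∀ x ∈ M, 0 < x) (he3 : 1 ≤ e → e + k + 2 ≤ nth M e)
    {i : ℕ} (hi1 : 1 ≤ i) (hi2 : i ≤ e) : nth (gB k e M) i = nth M i - 1 := by
  have hlen := lenB (k := k) hpos he3
  have hb := hblockB (k := k) hpos he3
  have h1 : i - 1 < ((M.take e).map (· - 1)).length := by omega
  rw [nth, gB, List.getD_append _ _ _ _ h1, List.getD_eq_getElem _ _ h1]
  simp only [List.getElem_map, List.getElem_take]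
  rw [nth, List.getD_eq_getElem _ _ (by omega)]

lemma nthB_mid (hpos : ∀ x ∈ M, 0 < x) (he3 : 1 ≤ e → e + k + 2 ≤ nth M e) :
    nth (gB k e M) (e + 1) = e + 1 + k := by
  have hb := hblockB (k := k) hpos he3
  rw [nth, gB, List.getD_append_right _ _ _ _ (by omega), hb]
  simp

lemma nthB_high (hpos : ∀ x ∈ M, 0 < x) (he3 : 1 ≤ e → e + k + 2 ≤ nth M e)
    {i : ℕ} (hi : e + 2 ≤ i) : nth (gB k e M) i = nth M (i - 1) := by
  have hb := hblockB (k := k) hpos he3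
  rw [nth, gB, List.getD_append_right _ _ _ _ (by omega), hb]
  rw [show i - 1 - e = (i - 2 - e) + 1 by omega, List.getD_cons_succ, getD_drop]
  rw [nth]
  congr 1
  omega

lemma sumB (hpos : ∀ x ∈ M, 0 < x) (he3 : 1 ≤ e → e + k + 2 ≤ nth M e) :
    (gB k e M).sum = M.sum + (k + 1) := by
  have hlen := lenB (k := k) hpos he3
  have h1 := sum_map_sub_one (M.take e) (fun x hx => hpos x (List.mem_of_mem_take hx))
  have h2 := List.sum_take_add_sum_drop M e
  have h3 : (M.take e).length = e := by simp [List.length_take]; omega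
  rw [gB]
  simp only [List.sum_append, List.sum_cons]
  omega

lemma sortedB (hM : M.Pairwise (· ≥ ·)) (hpos : ∀ x ∈ M, 0 < x)
    (he2 : nth M (e + 1) ≤ e + k + 1) (he3 : 1 ≤ e → e + k + 2 ≤ nth M e) :
    (gB k e M).Pairwise (· ≥ ·) := by
  rw [gB, List.pairwise_append]
  refine ⟨List.Pairwise.map _ (fun a b h => by omega)
      (List.Pairwise.sublist (List.take_sublist _ _) hM), ?_, ?_⟩
  · rw [List.pairwise_cons]
    refine ⟨?_, List.Pairwise.sublist (List.drop_sublist _ _) hM⟩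
    intro b hb
    obtain ⟨j, hj, rfl⟩ := mem_drop_nth hb
    have : nth M j ≤ nth M (e+1) := nth_anti hM (by omega) hj
    omega
  · intro a ha b hb
    obtain ⟨x, hx, rfl⟩ := List.mem_map.1 ha
    obtain ⟨i, hi1, hi2, rfl⟩ := mem_take_nth hx
    have hee : 1 ≤ e := le_trans hi1 hi2
    have h1 : nth M e ≤ nth M i := nth_anti hM hi1 hi2
    have h2 := he3 hee
    rcases List.mem_cons.1 hb with rfl | hb
    · omega
    · obtain ⟨j, hj, rfl⟩ := mem_drop_nth hb
      have : nth M j ≤ nth M (e+1) := nth_anti hM (by omega) hj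
      omega

lemma posB (hM : M.Pairwise (· ≥ ·)) (hpos : ∀ x ∈ M, 0 < x)
    (he3 : 1 ≤ e → e + k + 2 ≤ nth M e) : ∀ x ∈ gB k e M, 0 < x := by
  intro x hx
  rw [gB, List.mem_append] at hx
  rcases hx with hx | hx
  · obtain ⟨y, hy, rfl⟩ := List.mem_map.1 hx
    obtain ⟨i, hi1, hi2, rfl⟩ := mem_take_nth hy
    have hee : 1 ≤ e := le_trans hi1 hi2
    have h1 : nth M e ≤ nth M i := nth_anti hM hi1 hi2
    have h2 := he3 hee
    omega
  · rcases List.mem_cons.1 hx with rfl | hx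
    · omega
    · exact hpos x (List.mem_of_mem_drop hx)

lemma dfeB (hM : M.Pairwise (· ≥ ·)) (hpos : ∀ x ∈ M, 0 < x)
    (he2 : nth M (e + 1) ≤ e + k + 1) (he3 : 1 ≤ e → e + k + 2 ≤ nth M e) :
    dfe k (gB k e M) = e + 1 := by
  apply dfe_eq (sortedB hM hpos he2 he3) (by omega)
  · rw [nthB_mid hpos he3]
  · have h := nthB_high (k := k) hpos he3 (i := e + 2) (by omega)
    rw [show e + 1 + 1 = e + 2 from rfl, h, show e + 2 - 1 = e + 1 from rfl]
    omega

lemma TkB (hM : M.Pairwise (· ≥ ·)) (hpos : ∀ x ∈ M, 0 < x)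
    (he2 : nth M (e + 1) ≤ e + k + 1) (he3 : 1 ≤ e → e + k + 2 ≤ nth M e) :
    Tk k (gB k e M) := by
  refine ⟨e + 1, by omega, ?_, ?_⟩
  · rw [nthB_mid hpos he3]
  · have h := nthB_high (k := k) hpos he3 (i := e + 2) (by omega)
    rw [show e + 1 + 1 = e + 2 from rfl, h, show e + 2 - 1 = e + 1 from rfl]
    omega

lemma invB (hM : M.Pairwise (· ≥ ·)) (hpos : ∀ x ∈ M, 0 < x)
    (he2 : nth M (e + 1) ≤ e + k + 1) (he3 : 1 ≤ e → e + k + 2 ≤ nth M e) :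
    fwdL k (gB k e M) = M := by
  have hb := hblockB (k := k) hpos he3
  rw [fwdL, dfeB hM hpos he2 he3, fA]
  simp only [Nat.add_sub_cancel, gB]
  rw [List.take_left' hb]
  have h3 : ((M.take e).map (· - 1) ++ [e + 1 + k]).length = e + 1 := by
    rw [List.length_append, hb]; rfl
  rw [show (M.take e).map (· - 1) ++ (e + 1 + k) :: M.drop e
      = ((M.take e).map (· - 1) ++ [e + 1 + k]) ++ M.drop e by
    rw [List.append_assoc, List.singleton_append], List.drop_left' h3]
  have h4 : ((M.take e).map (· - 1)).map (· + 1) = M.take e := by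
    rw [List.map_map]
    have : ∀ a ∈ M.take e, ((· + 1) ∘ (· - 1)) a = id a := by
      intro a ha
      have := hpos a (List.mem_of_mem_take ha)
      simp
      omega
    rw [List.map_congr_left this, List.map_id]
  rw [h4, List.take_append_drop]

end CoreB

/-! ### Partitions as sorted lists -/

def SL (m : ℕ) : Type :=
  {L : List ℕ // L.Pairwise (· ≥ ·) ∧ (∀ x ∈ L, 0 < x) ∧ L.sum = m}

def partEquiv (m : ℕ) : Nat.Partition m ≃ SL m where
  toFun l := ⟨l.parts.sort (· ≥ ·), Multiset.pairwise_sort _ _,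
    fun x hx => l.parts_pos ((Multiset.mem_sort _).1 hx),
    by rw [← Multiset.sum_coe, Multiset.sort_eq, l.parts_sum]⟩
  invFun L := ⟨(↑L.1 : Multiset ℕ), fun {i} hi => L.2.2.1 i (by simpa using hi),
    by simpa using L.2.2.2⟩
  left_inv l := by
    ext1
    simp [Multiset.sort_eq]
  right_inv L := by
    apply Subtype.ext
    dsimp only
    apply List.Perm.eq_of_pairwise' (Multiset.pairwise_sort _ _) L.2.1
    rw [← Multiset.coe_eq_coe, Multiset.sort_eq]

noncomputable instance (m : ℕ) : Fintype (SL m) :=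
  Fintype.ofEquiv _ (partEquiv m)

noncomputable def pN (m : ℕ) : ℕ := Fintype.card (Nat.Partition m)

lemma card_SL (m : ℕ) : Nat.card (SL m) = pN m := by
  rw [Nat.card_congr (partEquiv m).symm, Nat.card_eq_fintype_card]; rfl

open Classical in
lemma card_not (m : ℕ) (p : SL m → Prop) :
    (Nat.card {L : SL m // ¬ p L} : ℤ) = (pN m : ℤ) - Nat.card {L : SL m // p L} := by
  have h : Nat.card {L : SL m // p L} + Nat.card {L : SL m // ¬ p L}
      = Nat.card (SL m) := by
    rw [← Nat.card_sum, Nat.card_congr (Equiv.sumCompl p)]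
  rw [← card_SL m, ← h]
  push_cast
  ring

/-! ### The step bijection -/

noncomputable def stepEquiv (k n : ℕ) (hkn : k + 1 ≤ n) :
    {L : SL n // Tk k L.1} ≃ {M : SL (n - (k+1)) // ¬ Tk (k+1) M.1} where
  toFun X :=
    ⟨⟨fwdL k X.1.1,
      sortedA X.1.2.1 (Tk_dfe X.1.2.1 X.2).1 (Tk_dfe X.1.2.1 X.2).2.1 (Tk_dfe X.1.2.1 X.2).2.2,
      posA X.1.2.2.1,
      by have h1 := sumA (k := k) (Tk_dfe X.1.2.1 X.2).1 (Tk_dfe X.1.2.1 X.2).2.1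
         have hs := X.1.2.2.2
         rw [fwdL]; omega⟩,
     ntA X.1.2.1 (Tk_dfe X.1.2.1 X.2).1 (Tk_dfe X.1.2.1 X.2).2.1 (Tk_dfe X.1.2.1 X.2).2.2⟩
  invFun Y :=
    ⟨⟨bwdL k Y.1.1,
      sortedB Y.1.2.1 Y.1.2.2.1 (notTk_facts Y.1.2.1 Y.2).1 (notTk_facts Y.1.2.1 Y.2).2,
      posB Y.1.2.1 Y.1.2.2.1 (notTk_facts Y.1.2.1 Y.2).2,
      by have h1 := sumB (k := k) Y.1.2.2.1 (notTk_facts Y.1.2.1 Y.2).2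
         have hs := Y.1.2.2.2
         rw [bwdL]; omega⟩,
     TkB Y.1.2.1 Y.1.2.2.1 (notTk_facts Y.1.2.1 Y.2).1 (notTk_facts Y.1.2.1 Y.2).2⟩
  left_inv X := by
    apply Subtype.ext; apply Subtype.ext
    exact invA X.1.2.1 (Tk_dfe X.1.2.1 X.2).1 (Tk_dfe X.1.2.1 X.2).2.1 (Tk_dfe X.1.2.1 X.2).2.2
  right_inv Y := by
    apply Subtype.ext; apply Subtype.ext
    exact invB Y.1.2.1 Y.1.2.2.1 (notTk_facts Y.1.2.1 Y.2).1 (notTk_facts Y.1.2.1 Y.2).2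

/-! ### Counting -/

noncomputable def bk (k n : ℕ) : ℕ := Nat.card {L : SL n // Tk k L.1}

lemma bk_small {k n : ℕ} (h : n ≤ k) : bk k n = 0 := by
  have : IsEmpty {L : SL n // Tk k L.1} := by
    constructor
    rintro ⟨⟨L, hs, hp, hsum⟩, ⟨d, h1, h2, h3⟩⟩
    have h2' : nth L d = d + k := h2
    have := nth_le_sum L d
    omega
  rw [bk, Nat.card_of_isEmpty]

lemma bk_rec {k n : ℕ} (h : k + 1 ≤ n) :
    (bk k n : ℤ) = (pN (n - (k+1)) : ℤ) - bk (k+1) (n - (k+1)) := by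
  rw [bk, Nat.card_congr (stepEquiv k n h), card_not, bk]

/-! ### The alternating sum -/

def tri (j : ℕ) : ℕ := j * (j + 1) / 2

lemma tri_succ (j : ℕ) : tri (j + 1) = tri j + (j + 1) := by
  unfold tri
  rw [show (j+1) * ((j+1)+1) = j*(j+1) + 2*(j+1) from by ring]
  generalize j * (j + 1) = a
  omega

lemma tri_ge (j : ℕ) : j ≤ tri j := by
  induction j with
  | zero => simp [tri]
  | succ m ih => rw [tri_succ]; omega

noncomputable def Ssum (k n : ℕ) : ℤ :=
  ∑ j ∈ Finset.range (n + 1),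
    if j * k + tri j ≤ n then (-1 : ℤ) ^ j * (pN (n - (j * k + tri j)) : ℤ) else 0

lemma Ssum_small {k n : ℕ} (h : n ≤ k) : Ssum k n = (pN n : ℤ) := by
  rw [Ssum, Finset.sum_eq_single_of_mem 0 (Finset.mem_range.2 (by omega))]
  · simp [tri]
  · intro j hj hj0
    have h1 : 1 ≤ j := by omega
    have h2 : k ≤ j * k := Nat.le_mul_of_pos_left k h1
    have h3 := tri_ge j
    rw [if_neg (by omega)]

lemma Ssum_rec {k n : ℕ} (h : k + 1 ≤ n) :
    Ssum k n = (pN n : ℤ) - Ssum (k+1) (n - (k+1)) := by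
  rw [Ssum, Finset.sum_range_succ']
  have h0 : (if 0 * k + tri 0 ≤ n then (-1 : ℤ) ^ 0 * (pN (n - (0 * k + tri 0)) : ℤ) else 0)
      = (pN n : ℤ) := by simp [tri]
  rw [h0]
  have hterm : ∀ j,
      (if (j+1) * k + tri (j+1) ≤ n then (-1 : ℤ) ^ (j+1) * (pN (n - ((j+1) * k + tri (j+1))) : ℤ) else 0)
      = -(if j * (k+1) + tri j ≤ n - (k+1) then (-1 : ℤ) ^ j * (pN ((n - (k+1)) - (j * (k+1) + tri j)) : ℤ) else 0) := by
    intro j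
    have hkey : (j+1) * k + tri (j+1) = (k+1) + (j * (k+1) + tri j) := by
      rw [tri_succ]; ring
    rw [hkey]
    by_cases hc : j * (k+1) + tri j ≤ n - (k+1)
    · rw [if_pos (by omega), if_pos hc, pow_succ]
      have : n - ((k+1) + (j * (k+1) + tri j)) = (n - (k+1)) - (j * (k+1) + tri j) := by omega
      rw [this]; ring
    · rw [if_neg (by omega), if_neg hc]; ring
  rw [Finset.sum_congr rfl (fun j _ => hterm j), Finset.sum_neg_distrib]
  have hsub : Ssum (k+1) (n - (k+1)) = ∑ j ∈ Finset.range n,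
      (if j * (k+1) + tri j ≤ n - (k+1) then (-1 : ℤ) ^ j * (pN ((n - (k+1)) - (j * (k+1) + tri j)) : ℤ) else 0) := by
    rw [Ssum]
    apply Finset.sum_subset (Finset.range_subset_range.2 (by omega))
    intro j hj hj2
    simp only [Finset.mem_range] at hj hj2
    have h1 : j ≤ j * (k+1) := Nat.le_mul_of_pos_right j (by omega)
    rw [if_neg (by omega)]
  rw [hsub]
  ring

lemma main_ind : ∀ n k : ℕ, (bk k n : ℤ) = (pN n : ℤ) - Ssum k n := by
  intro n
  induction n using Nat.strong_induction_on with
  | _ n ih =>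
    intro k
    rcases le_or_gt (k+1) n with h | h
    · rw [bk_rec h, ih _ (by omega) (k+1), Ssum_rec h]
      ring
    · rw [bk_small (by omega), Ssum_small (by omega)]
      simp

/-! ### Relating the statement's predicate to `¬ Tk 0` -/

lemma durfee_iff {n : ℕ} (hn : 1 ≤ n) {L : List ℕ} (hL : L.Pairwise (· ≥ ·))
    (hp : ∀ x ∈ L, 0 < x) (hsum : L.sum = n) :
    (dfe 0 L < nth L (dfe 0 L)) ↔ ¬ Tk 0 L := by
  have hne : (dS 0 L).Nonempty := by
    refine ⟨1, le_refl 1, ?_⟩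
    have hlen : 0 < L.length := by
      rcases L with _ | ⟨a, t⟩
      · simp at hsum; omega
      · simp
    have : nth L 1 = L[0] := nth_eq_getElem (by omega)
    have hpos0 : 0 < L[0] := hp _ (List.getElem_mem hlen)
    omega
  obtain ⟨h1, h2, h3⟩ := dfe_spec hL hne
  constructor
  · intro hlt
    rintro ⟨d, hd1, hd2, hd3⟩
    have := dfe_eq hL hd1 (le_of_eq hd2.symm) hd3
    rw [this] at hlt h2
    omega
  · intro hnT
    rcases eq_or_lt_of_le h2 with heq | hlt
    · exact absurd ⟨dfe 0 L, h1, by omega, h3⟩ hnT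
    · omega

end Stmt8Aux

open Stmt8Aux in
theorem stmt8 (n : ℕ) (hn : 1 ≤ n) :
    (Nat.card {l : n.Partition // l.durfee < l.nthPart l.durfee} : ℤ) =
      ∑ j ∈ (Finset.range (n + 1)).filter (fun j => j * (j + 1) / 2 ≤ n),
        (-1) ^ j * (Fintype.card (Nat.Partition (n - j * (j + 1) / 2)) : ℤ) := by
  have hequiv : {l : n.Partition // l.durfee < l.nthPart l.durfee}
      ≃ {L : SL n // ¬ Tk 0 L.1} := by
    apply Equiv.subtypeEquiv (partEquiv n)
    intro l
    have hL : ((partEquiv n) l).1 = l.parts.sort (· ≥ ·) := rfl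
    have hnth : ∀ i, l.nthPart i = nth ((partEquiv n) l).1 i := fun i => rfl
    have hdur : l.durfee = dfe 0 ((partEquiv n) l).1 := by
      unfold Nat.Partition.durfee dfe dS
      congr 1
    rw [hdur, hnth]
    exact durfee_iff hn ((partEquiv n) l).2.1 ((partEquiv n) l).2.2.1 ((partEquiv n) l).2.2.2
  rw [Nat.card_congr hequiv]
  have h1 : (Nat.card {L : SL n // ¬ Tk 0 L.1} : ℤ) = (pN n : ℤ) - bk 0 n := by
    rw [card_not, bk]
  rw [h1, main_ind n 0]
  have h2 : Ssum 0 n = ∑ j ∈ (Finset.range (n + 1)).filter (fun j => j * (j + 1) / 2 ≤ n),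
      (-1) ^ j * (Fintype.card (Nat.Partition (n - j * (j + 1) / 2)) : ℤ) := by
    rw [Finset.sum_filter, Ssum]
    apply Finset.sum_congr rfl
    intro j _
    simp [tri, pN]
  rw [← h2]
  ring
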